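/- Discrete Stokes formula: let O' be the cell complex dual to a triangulation O of the torus, let θ : corners(O) → ℝ satisfy (i) θ_j + θ_{j'} = π - α(e) for the two corners j, j' opposite to each edge e of O, and (ii) θ_j + θ_{j'} + θ_{j''} = π for the corners of each triangle, and assume the angle weights around each vertex of O sum to 2π. Then for every subcomplex Γ of O', Σ_{ε ∈ ΔΓ} θ_{ι(ε)} = π·χ(Γ) + (1/2) Σ_{e ∈ ∂Γ} α(e*), where ΔΓ is the set of oriented dual edges pointing into Γ but not contained in Γ, and the boundary sum counts edges of Γ adjacent to a face not in Γ (with multiplicity two if both sides are outside Γ). -/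
import Mathlib


open Finset Real

/-- A combinatorial triangulation `O = (V, E, F)` of the torus with `m`
triangles. `Cor` is the set of the `3m` corners of triangles; `tri j` is the
triangle containing the corner `j`, `vert j` its vertex, `opp j` the edge of
its triangle opposite to it; `nxt` is the counterclockwise next corner inside
each triangle (a fixed-point free rotation of order 3 on each fiber of `tri`);
`sgm j` is the other corner opposite to the same edge `opp j`, in the triangle
adjacent across that edge.  The cardinality axioms encode `|F| = m`,
`2|E| = 3m`, `2|V| = m` (so `χ = V - E + F = 0`, as for the torus), and the
last axiom says that the two endpoints of an edge (namely the vertices of the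
two other corners of an adjacent triangle) do not depend, as an unordered
pair, on the side from which they are computed. -/
structure TorusTriangulation (Cor F E V : Type*)
    [Fintype Cor] [DecidableEq Cor] [Fintype F] [DecidableEq F]
    [Fintype E] [DecidableEq E] [Fintype V] [DecidableEq V] where
  m : ℕ
  hm : 0 < m
  tri : Cor → F
  vert : Cor → V
  opp : Cor → E
  nxt : Cor → Cor
  sgm : Cor → Cor
  card_cor : Fintype.card Cor = 3 * m
  card_faces : Fintype.card F = m
  card_edges : 2 * Fintype.card E = 3 * m
  card_verts : 2 * Fintype.card V = m
  tri_nxt : ∀ j, tri (nxt j) = tri j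
  nxt_nxt_nxt : ∀ j, nxt (nxt (nxt j)) = j
  nxt_ne : ∀ j, nxt j ≠ j
  tri_fiber : ∀ j k, tri j = tri k → k = j ∨ k = nxt j ∨ k = nxt (nxt j)
  sgm_sgm : ∀ j, sgm (sgm j) = j
  sgm_ne : ∀ j, sgm j ≠ j
  opp_sgm : ∀ j, opp (sgm j) = opp j
  opp_fiber : ∀ j k, opp j = opp k → k = j ∨ k = sgm j
  opp_surj : Function.Surjective opp
  endpoints_sgm : ∀ j, ({vert (nxt j), vert (nxt (nxt j))} : Multiset V) =
    {vert (nxt (sgm j)), vert (nxt (nxt (sgm j)))}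

variable {Cor F E V : Type*}
    [Fintype Cor] [DecidableEq Cor] [Fintype F] [DecidableEq F]
    [Fintype E] [DecidableEq E] [Fintype V] [DecidableEq V]

namespace TorusTriangulation

variable {Cor F E V : Type*}
    [Fintype Cor] [DecidableEq Cor] [Fintype F] [DecidableEq F]
    [Fintype E] [DecidableEq E] [Fintype V] [DecidableEq V]
    (T : TorusTriangulation Cor F E V)

lemma nxt_bij : Function.Bijective T.nxt :=
  Function.bijective_iff_has_inverse.mpr
    ⟨T.nxt ∘ T.nxt, fun j => T.nxt_nxt_nxt j, fun j => T.nxt_nxt_nxt j⟩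

lemma nxt2_bij : Function.Bijective (T.nxt ∘ T.nxt) :=
  (T.nxt_bij).comp (T.nxt_bij)

lemma sgm_bij : Function.Bijective T.sgm :=
  Function.bijective_iff_has_inverse.mpr
    ⟨T.sgm, fun j => T.sgm_sgm j, fun j => T.sgm_sgm j⟩

lemma nxt2_ne (j : Cor) : T.nxt (T.nxt j) ≠ j := by
  intro h
  have := congrArg T.nxt h
  rw [T.nxt_nxt_nxt] at this
  exact T.nxt_ne j this.symm

lemma nxt2_ne_nxt (j : Cor) : T.nxt (T.nxt j) ≠ T.nxt j := fun h =>
  T.nxt_ne j (T.nxt_bij.injective h)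

lemma tri_fiber_eq (j : Cor) :
    Finset.univ.filter (fun k => T.tri k = T.tri j)
      = {j, T.nxt j, T.nxt (T.nxt j)} := by
  ext k
  simp only [Finset.mem_filter, Finset.mem_univ, true_and, Finset.mem_insert,
    Finset.mem_singleton]
  constructor
  · intro h; exact T.tri_fiber j k h.symm
  · rintro (rfl | rfl | rfl)
    · rfl
    · exact T.tri_nxt j
    · rw [T.tri_nxt, T.tri_nxt]

lemma sum_tri_fiber (f : Cor → ℝ) (j : Cor) :
    ∑ k ∈ Finset.univ.filter (fun k => T.tri k = T.tri j), f k
      = f j + f (T.nxt j) + f (T.nxt (T.nxt j)) := by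
  rw [T.tri_fiber_eq j]
  rw [Finset.sum_insert (by
    simp only [Finset.mem_insert, Finset.mem_singleton]
    push_neg
    exact ⟨fun h => T.nxt_ne j h.symm, fun h => T.nxt2_ne j h.symm⟩),
    Finset.sum_pair (T.nxt2_ne_nxt j).symm]
  ring

lemma tri_surj : Function.Surjective T.tri := by
  intro x
  by_contra h
  push_neg at h
  have hcard : Fintype.card Cor =
      ∑ y : F, (Finset.univ.filter (fun k => T.tri k = y)).card :=
    Finset.card_eq_sum_card_fiberwise (fun k _ => Finset.mem_univ _)
  have hle : ∀ y : F, (Finset.univ.filter (fun k => T.tri k = y)).card ≤ 3 := by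
    intro y
    rcases (Finset.univ.filter (fun k => T.tri k = y)).eq_empty_or_nonempty with he | ⟨j, hj⟩
    · simp [he]
    · have : T.tri j = y := (Finset.mem_filter.mp hj).2
      subst this
      rw [T.tri_fiber_eq j]
      exact (Finset.card_insert_le _ _).trans
        (Nat.succ_le_succ (Finset.card_insert_le _ _))
  have hx : (Finset.univ.filter (fun k => T.tri k = x)).card = 0 := by
    rw [Finset.card_eq_zero, Finset.filter_eq_empty_iff]
    intro k _
    exact h k
  have h1 : ∑ y : F, (Finset.univ.filter (fun k => T.tri k = y)).card
      ≤ ∑ _y ∈ Finset.univ.erase x, 3 := by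
    rw [← Finset.add_sum_erase _ _ (Finset.mem_univ x), hx, Nat.zero_add]
    exact Finset.sum_le_sum fun y _ => hle y
  have h2 : (Finset.univ.erase x).card = Fintype.card F - 1 := by
    rw [Finset.card_erase_of_mem (Finset.mem_univ x), Finset.card_univ]
  rw [Finset.sum_const, h2, smul_eq_mul] at h1
  have h3 : Fintype.card Cor ≤ (Fintype.card F - 1) * 3 := hcard ▸ h1
  rw [T.card_cor, T.card_faces] at h3
  have := T.hm
  omega

lemma opp_fiber_eq (j : Cor) :
    Finset.univ.filter (fun k => T.opp k = T.opp j) = {j, T.sgm j} := by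
  ext k
  simp only [Finset.mem_filter, Finset.mem_univ, true_and, Finset.mem_insert,
    Finset.mem_singleton]
  constructor
  · intro h; exact T.opp_fiber j k h.symm
  · rintro (rfl | rfl)
    · rfl
    · exact T.opp_sgm j

lemma sum_opp_fiber (f : Cor → ℝ) (j : Cor) :
    ∑ k ∈ Finset.univ.filter (fun k => T.opp k = T.opp j), f k
      = f j + f (T.sgm j) := by
  rw [T.opp_fiber_eq j, Finset.sum_pair (T.sgm_ne j).symm]

end TorusTriangulation

/-- **Discrete Stokes formula.**  Let `θ` satisfy the edge equations
`θⱼ + θ_{σj} = π - α(opp j)` and the triangle equations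
`θⱼ + θ_{nxt j} + θ_{nxt² j} = π`, and assume the `α`-weights around each
vertex sum to `2π` (each corner at `v` sees its two incident edges, so the
doubled count below equals `4π`).  Let `Γ` be a subcomplex of the dual
complex, given by its dual vertices `VG ⊆ F`, dual edges `EG ⊆ E` and dual
faces `FG ⊆ V`, closed under taking boundaries.  Then the sum of `θ` over the
discrete boundary `ΔΓ` (oriented dual edges, i.e. corners `j`, pointing into
`Γ` but not contained in it) equals `π·χ(Γ)` plus half the sum of `α(e*)`
over boundary edges of `Γ`, each edge counted once for each of its two sides
adjacent to a dual face outside `Γ`; since every such (edge, side) pair is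
seen by the two corners opposite the edge, the factor is `1/4` below. -/
theorem discrete_stokes_formula (T : TorusTriangulation Cor F E V)
    (θ : Cor → ℝ) (α : E → ℝ)
    (hedge : ∀ j, θ j + θ (T.sgm j) = π - α (T.opp j))
    (htri : ∀ j, θ j + θ (T.nxt j) + θ (T.nxt (T.nxt j)) = π)
    (hvert : ∀ v : V,
      ∑ j ∈ univ.filter (fun j => T.vert j = v),
        (α (T.opp (T.nxt j)) + α (T.opp (T.nxt (T.nxt j)))) = 4 * π)
    (VG : Finset F) (EG : Finset E) (FG : Finset V)
    (hclosE : ∀ j, T.opp j ∈ EG → T.tri j ∈ VG)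
    (hclosF : ∀ j, T.vert j ∈ FG →
      T.opp (T.nxt j) ∈ EG ∧ T.opp (T.nxt (T.nxt j)) ∈ EG) :
    ∑ j ∈ univ.filter (fun j => T.tri j ∈ VG ∧ T.opp j ∉ EG), θ j
      = π * ((VG.card : ℝ) - (EG.card : ℝ) + (FG.card : ℝ))
        + (1/4) * ∑ j ∈ univ.filter (fun j => T.opp j ∈ EG),
            ((if T.vert (T.nxt j) ∈ FG then 0 else α (T.opp j)) +
             (if T.vert (T.nxt (T.nxt j)) ∈ FG then 0 else α (T.opp j))) := by
  classical
  set Bs := univ.filter (fun j => T.opp j ∈ EG) with hBsdef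
  set W := ∑ j ∈ Bs, α (T.opp j) with hWdef
  -- counting helper over edge fibers
  have hcnt : ∀ g : E → ℝ, ∑ j ∈ Bs, g (T.opp j) = 2 * ∑ e ∈ EG, g e := by
    intro g
    rw [hBsdef, ← Finset.sum_fiberwise_eq_sum_filter univ EG T.opp
      (fun j => g (T.opp j)), Finset.mul_sum]
    refine Finset.sum_congr rfl fun e he => ?_
    obtain ⟨j0, rfl⟩ := T.opp_surj e
    rw [T.sum_opp_fiber (fun k => g (T.opp k)) j0, T.opp_sgm]
    ring
  -- sum of θ over faces of Γ
  have hSA : ∑ j ∈ univ.filter (fun j => T.tri j ∈ VG), θ j = π * VG.card := by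
    rw [← Finset.sum_fiberwise_eq_sum_filter univ VG T.tri θ]
    have h : ∀ x ∈ VG, ∑ j ∈ univ.filter (fun j => T.tri j = x), θ j = π := by
      intro x _
      obtain ⟨j0, rfl⟩ := T.tri_surj x
      rw [T.sum_tri_fiber θ j0]
      exact htri j0
    rw [Finset.sum_congr rfl h, Finset.sum_const, nsmul_eq_mul, mul_comm]
  -- sum of θ over edges of Γ
  have hsgmB : ∑ j ∈ Bs, θ (T.sgm j) = ∑ j ∈ Bs, θ j := by
    rw [hBsdef, Finset.sum_filter, Finset.sum_filter]
    have h1 : ∀ j : Cor, (if T.opp j ∈ EG then θ (T.sgm j) else 0)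
        = (if T.opp (T.sgm j) ∈ EG then θ (T.sgm j) else 0) := by
      intro j; rw [T.opp_sgm]
    rw [Finset.sum_congr rfl fun j _ => h1 j]
    exact T.sgm_bij.sum_comp (fun k => if T.opp k ∈ EG then θ k else 0)
  have hSB : ∑ j ∈ Bs, θ j = π * EG.card - (1/2) * W := by
    have h2 : ∑ j ∈ Bs, θ j + ∑ j ∈ Bs, θ (T.sgm j)
        = ∑ j ∈ Bs, ((fun _ : E => π) (T.opp j)) - W := by
      rw [hWdef, ← Finset.sum_add_distrib, ← Finset.sum_sub_distrib]
      exact Finset.sum_congr rfl fun j _ => hedge j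
    rw [hsgmB, hcnt (fun _ => π), Finset.sum_const, nsmul_eq_mul] at h2
    linarith
  -- vertex sums
  have hFG : ∑ j ∈ univ.filter (fun j => T.vert j ∈ FG),
      (α (T.opp (T.nxt j)) + α (T.opp (T.nxt (T.nxt j)))) = 4 * π * FG.card := by
    rw [← Finset.sum_fiberwise_eq_sum_filter univ FG T.vert
      (fun j => α (T.opp (T.nxt j)) + α (T.opp (T.nxt (T.nxt j))))]
    rw [Finset.sum_congr rfl fun v _ => hvert v, Finset.sum_const, nsmul_eq_mul]
    ring
  have hY1 : ∑ j ∈ Bs, (if T.vert (T.nxt j) ∈ FG then α (T.opp j) else 0)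
      = ∑ j : Cor, if T.vert j ∈ FG then α (T.opp (T.nxt (T.nxt j))) else 0 := by
    rw [hBsdef, Finset.sum_filter]
    have h1 : ∀ j : Cor,
        (if T.opp j ∈ EG then (if T.vert (T.nxt j) ∈ FG then α (T.opp j) else 0) else 0)
        = (fun k => if T.vert k ∈ FG then α (T.opp (T.nxt (T.nxt k))) else 0) (T.nxt j) := by
      intro j
      simp only
      rw [T.nxt_nxt_nxt j]
      by_cases hC : T.vert (T.nxt j) ∈ FG
      · have hB : T.opp j ∈ EG := by
          have := (hclosF (T.nxt j) hC).2
          rwa [T.nxt_nxt_nxt j] at this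
        simp [hB, hC]
      · simp [hC]
    rw [Finset.sum_congr rfl fun j _ => h1 j]
    simpa using T.nxt_bij.sum_comp
      (fun k => if T.vert k ∈ FG then α (T.opp (T.nxt (T.nxt k))) else 0)
  have hY2 : ∑ j ∈ Bs, (if T.vert (T.nxt (T.nxt j)) ∈ FG then α (T.opp j) else 0)
      = ∑ j : Cor, if T.vert j ∈ FG then α (T.opp (T.nxt j)) else 0 := by
    rw [hBsdef, Finset.sum_filter]
    have h1 : ∀ j : Cor,
        (if T.opp j ∈ EG then
          (if T.vert (T.nxt (T.nxt j)) ∈ FG then α (T.opp j) else 0) else 0)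
        = (fun k => if T.vert k ∈ FG then α (T.opp (T.nxt k)) else 0)
            (T.nxt (T.nxt j)) := by
      intro j
      simp only
      rw [T.nxt_nxt_nxt j]
      by_cases hC : T.vert (T.nxt (T.nxt j)) ∈ FG
      · have hB : T.opp j ∈ EG := by
          have := (hclosF (T.nxt (T.nxt j)) hC).1
          rwa [T.nxt_nxt_nxt j] at this
        simp [hB, hC]
      · simp [hC]
    rw [Finset.sum_congr rfl fun j _ => h1 j]
    simpa using T.nxt2_bij.sum_comp
      (fun k => if T.vert k ∈ FG then α (T.opp (T.nxt k)) else 0)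
  -- the boundary α-sum
  have hX : ∑ j ∈ Bs, ((if T.vert (T.nxt j) ∈ FG then 0 else α (T.opp j)) +
      (if T.vert (T.nxt (T.nxt j)) ∈ FG then 0 else α (T.opp j)))
      = 2 * W - 4 * π * FG.card := by
    have hsum : ∑ j ∈ Bs, ((if T.vert (T.nxt j) ∈ FG then 0 else α (T.opp j)) +
        (if T.vert (T.nxt (T.nxt j)) ∈ FG then 0 else α (T.opp j)))
        = (∑ j ∈ Bs, α (T.opp j)) + (∑ j ∈ Bs, α (T.opp j))
          - ((∑ j ∈ Bs, (if T.vert (T.nxt j) ∈ FG then α (T.opp j) else 0))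
            + (∑ j ∈ Bs, (if T.vert (T.nxt (T.nxt j)) ∈ FG then α (T.opp j) else 0))) := by
      rw [← Finset.sum_add_distrib, ← Finset.sum_add_distrib, ← Finset.sum_sub_distrib]
      refine Finset.sum_congr rfl fun j _ => ?_
      by_cases h1 : T.vert (T.nxt j) ∈ FG <;>
        by_cases h2 : T.vert (T.nxt (T.nxt j)) ∈ FG <;> simp [h1, h2] <;> ring
    rw [hsum, hY1, hY2, ← hWdef]
    have : (∑ j : Cor, if T.vert j ∈ FG then α (T.opp (T.nxt (T.nxt j))) else 0)
        + (∑ j : Cor, if T.vert j ∈ FG then α (T.opp (T.nxt j)) else 0)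
        = 4 * π * FG.card := by
      rw [← Finset.sum_add_distrib, ← hFG, Finset.sum_filter]
      refine Finset.sum_congr rfl fun j _ => ?_
      by_cases hC : T.vert j ∈ FG <;> simp [hC] <;> ring
    linarith
  -- splitting the boundary θ-sum
  have hsplit : ∑ j ∈ univ.filter (fun j => T.tri j ∈ VG ∧ T.opp j ∉ EG), θ j
      + ∑ j ∈ Bs, θ j = ∑ j ∈ univ.filter (fun j => T.tri j ∈ VG), θ j := by
    rw [hBsdef, Finset.sum_filter, Finset.sum_filter, Finset.sum_filter,
      ← Finset.sum_add_distrib]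
    refine Finset.sum_congr rfl fun j _ => ?_
    by_cases hB : T.opp j ∈ EG
    · simp [hB, hclosE j hB]
    · by_cases hA : T.tri j ∈ VG <;> simp [hA, hB]
  linarith
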